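/- Let x₁, x₂, y₁, y₂ be real numbers. Set a = x₁ − x₂, b = x₁ + x₂, let D be the 4×4 diagonal matrix diag(a, −b, b, −a), and let C be the 4×4 symmetric matrix with rows (0, −y₁, y₂, 0), (−y₁, 0, 0, y₂), (y₂, 0, 0, −y₁), (0, y₂, −y₁, 0). Let N be the 16×8 real matrix built from the four vertically stacked 4×8 row-blocks [0 | D], [−D | 0], [0 | C], [−C | 0], where 0 denotes the 4×4 zero matrix. Then det(Nᵀ·N) = f(x₁, x₂, y₁, y₂)². -/

import Mathlib

open Matrix

noncomputable def f (x₁ x₂ y₁ y₂ : ℝ) : ℝ :=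
  ((x₁ - x₂)^2 + (y₁ - y₂)^2) * ((x₁ + x₂)^2 + (y₁ - y₂)^2) *
  ((x₁ - x₂)^2 + (y₁ + y₂)^2) * ((x₁ + x₂)^2 + (y₁ + y₂)^2)

lemma blk_det {m n : Type*} [Fintype m] [Fintype n] [DecidableEq m] [DecidableEq n]
    (A : Matrix m m ℝ) (B : Matrix n n ℝ) :
    (Matrix.fromBlocks A 0 0 B).det = A.det * B.det := by
  convert Matrix.det_fromBlocks_zero₂₁ A (0 : Matrix m n ℝ) B using 2

set_option maxHeartbeats 1000000 in
theorem stmt_9 (x₁ x₂ y₁ y₂ a b : ℝ) (ha : a = x₁ - x₂) (hb : b = x₁ + x₂)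
    (D C : Matrix (Fin 4) (Fin 4) ℝ)
    (hD : D = Matrix.diagonal ![a, -b, b, -a])
    (hC : C = !![0, -y₁, y₂, 0;
                 -y₁, 0, 0, y₂;
                 y₂, 0, 0, -y₁;
                 0, y₂, -y₁, 0])
    (N : Matrix ((Fin 4 ⊕ Fin 4) ⊕ (Fin 4 ⊕ Fin 4)) (Fin 4 ⊕ Fin 4) ℝ)
    (hN : N = Matrix.fromRows
      (Matrix.fromRows (Matrix.fromCols 0 D) (Matrix.fromCols (-D) 0))
      (Matrix.fromRows (Matrix.fromCols 0 C) (Matrix.fromCols (-C) 0))) :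
    (N.transpose * N).det = (f x₁ x₂ y₁ y₂)^2 := by
  have key : N.transpose * N =
      Matrix.fromBlocks (Dᵀ*D + Cᵀ*C) 0 0 (Dᵀ*D + Cᵀ*C) := by
    subst hN
    simp only [Matrix.transpose_fromRows, Matrix.transpose_fromCols,
      Matrix.fromCols_mul_fromRows, Matrix.fromRows_mul_fromCols,
      Matrix.fromBlocks_add, Matrix.transpose_zero, Matrix.transpose_neg,
      Matrix.mul_zero, Matrix.zero_mul, Matrix.neg_mul, Matrix.mul_neg, neg_neg,
      add_zero, zero_add, neg_zero]
  have hdet : (Dᵀ*D + Cᵀ*C).det =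
      ((a^2+(y₁-y₂)^2)*(b^2+(y₁-y₂)^2)*(a^2+(y₁+y₂)^2)*(b^2+(y₁+y₂)^2)) := by
    have hD' : D = !![a,0,0,0; 0,-b,0,0; 0,0,b,0; 0,0,0,-a] := by
      subst hD; ext i j; fin_cases i <;> fin_cases j <;> rfl
    have hCt : Cᵀ = C := by subst hC; ext i j; fin_cases i <;> fin_cases j <;> rfl
    have hDt : Dᵀ = D := by subst hD; exact Matrix.diagonal_transpose _
    rw [hCt, hDt]
    have : D * D + C * C =
        !![a^2+y₁^2+y₂^2, 0, 0, -2*y₁*y₂;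
           0, b^2+y₁^2+y₂^2, -2*y₁*y₂, 0;
           0, -2*y₁*y₂, b^2+y₁^2+y₂^2, 0;
           -2*y₁*y₂, 0, 0, a^2+y₁^2+y₂^2] := by
      subst hD' hC
      ext i j
      fin_cases i <;> fin_cases j <;>
        · simp [Matrix.mul_apply, Fin.sum_univ_four, Matrix.vecHead, Matrix.vecTail]
          try ring
    rw [this, Matrix.det_succ_row_zero]
    simp [Fin.sum_univ_succ, Matrix.det_fin_three, Matrix.submatrix_apply, Fin.succAbove,
      Matrix.vecHead, Matrix.vecTail]
    ring
  have h2 : (N.transpose * N).det = (Dᵀ*D + Cᵀ*C).det * (Dᵀ*D + Cᵀ*C).det := by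
    rw [key]
    exact blk_det _ _
  rw [h2, hdet]
  subst ha hb
  unfold f
  ring
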